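/- If a finite group G has the d-uniform Hales–Jewett property, then for every positive integer k, G has the kd-uniform Hales–Jewett property. -/
import Mathlib


/-- Evaluation of a variable word: letters are left unchanged, the variable `v_s`
is replaced by `s • x`. -/
def evalW {S X : Type*} [SMul S X] {N : ℕ} (w : Fin N → X ⊕ S) (x : X) : Fin N → X :=
  fun i => Sum.elim id (fun s => s • x) (w i)

open scoped Classical in
/-- `w` is a uniform variable word of degree `d`: every variable `v_s` (`s : S`)
occurs the same positive number of times, and the total number of variable
positions is `d`. -/
def IsUnifWord {S X : Type*} {N : ℕ} (w : Fin N → X ⊕ S) (d : ℕ) : Prop :=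
  (∃ m : ℕ, 0 < m ∧ ∀ s : S,
      (Finset.univ.filter (fun i => w i = Sum.inr s)).card = m) ∧
  (Finset.univ.filter (fun i => (w i).isRight = true)).card = d

/-- `G` has the `d`-uniform Hales–Jewett property. -/
def UHJP (G : Type*) [Group G] (d : ℕ) : Prop :=
  ∀ r : ℕ, ∃ N : ℕ, ∀ c : (Fin N → G) → Fin r,
    ∃ w : Fin N → G ⊕ G, IsUnifWord w d ∧
      ∀ g g' : G, c (evalW w g) = c (evalW w g')

/-- `(S, X)` has the `(E, d)`-uniform Hales–Jewett property. -/
def PairUHJP (S X : Type*) [SMul S X] (E : X → X → Prop) (d : ℕ) : Prop :=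
  ∀ r : ℕ, ∃ N : ℕ, ∀ c : (Fin N → X) → Fin r,
    ∃ w : Fin N → X ⊕ S, IsUnifWord w d ∧
      ∀ x x' : X, E x x' → c (evalW w x) = c (evalW w x')

lemma filter_comp_card {k N : ℕ} (P : Fin N → Prop) [DecidablePred P]
    [DecidablePred fun j : Fin (k * N) => P (finProdFinEquiv.symm j).2] :
    (Finset.univ.filter (fun j : Fin (k * N) => P (finProdFinEquiv.symm j).2)).card
      = k * (Finset.univ.filter P).card := by
  have h : k * (Finset.univ.filter P).card
      = ((Finset.univ : Finset (Fin k)) ×ˢ (Finset.univ.filter P)).card := by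
    rw [Finset.card_product, Finset.card_univ, Fintype.card_fin]
  rw [h]
  exact Finset.card_bij' (fun j _ => finProdFinEquiv.symm j) (fun p _ => finProdFinEquiv p)
    (by intro a ha; simp at ha ⊢; exact ha)
    (by intro a ha; simp only [Finset.mem_product, Finset.mem_filter, Finset.mem_univ, true_and]
        at ha ⊢; rw [finProdFinEquiv.symm_apply_apply]; exact ha)
    (fun a _ => finProdFinEquiv.apply_symm_apply a)
    (fun a _ => finProdFinEquiv.symm_apply_apply a)

/-- If a finite group `G` has the `d`-UHJP then it has the `k·d`-UHJP for every `k ≥ 1`. -/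
theorem UHJP_mul (G : Type*) [Group G] [Fintype G] (d : ℕ) (hG : UHJP G d)
    (k : ℕ) (hk : 0 < k) : UHJP G (k * d) := by
  classical
  intro r
  obtain ⟨N, hN⟩ := hG r
  refine ⟨k * N, fun c => ?_⟩
  obtain ⟨w, ⟨⟨m, hm, hcount⟩, hdeg⟩, hmono⟩ :=
    hN (fun x => c (fun j => x (finProdFinEquiv.symm j).2))
  refine ⟨fun j => w (finProdFinEquiv.symm j).2,
    ⟨⟨k * m, by positivity, fun s => ?_⟩, ?_⟩, fun g g' => hmono g g'⟩
  · rw [filter_comp_card (P := fun i => w i = Sum.inr s), hcount s]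
  · rw [filter_comp_card (P := fun i => (w i).isRight = true), hdeg]
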